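/- (Line Choice) Let Ω⁺ ⊂ ℝ² be a Jordan domain, Ω⁻ = ℝ² \ closure(Ω⁺), and Γ = ∂Ω⁺ = ∂Ω⁻. Fix α ∈ (0,1) and C₀ > 0, and suppose there exists r₀ > 0 such that ε(x,r) ≤ C₀·r^α for all x ∈ Γ and all 0 < r ≤ r₀. Fix x₀ ∈ Γ and 0 < t ≤ r₀, and let y, w ∈ ∂B(x₀,t) ∩ Γ. Let L_t(x₀,w) denote the line through x₀ and w and L_t(x₀,y) the line through x₀ and y. Then the angle between the two lines satisfies ∠(L_t(x₀,w), L_t(x₀,y)) ≤ 2C₀·t^α. -/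

import Mathlib

open Set Metric MeasureTheory

noncomputable section

abbrev E2 := EuclideanSpace ℝ (Fin 2)

/-- The point on the circle of center `x` and radius `r` at angle `t`. -/
def circlePt (x : E2) (r t : ℝ) : E2 :=
  x + r • (EuclideanSpace.equiv (Fin 2) ℝ).symm ![Real.cos t, Real.sin t]

/-- `A` is an open arc of the circle `∂B(x,r)`. -/
def IsOpenArc (x : E2) (r : ℝ) (A : Set E2) : Prop :=
  ∃ a b : ℝ, a < b ∧ b - a ≤ 2 * Real.pi ∧ A = circlePt x r '' Set.Ioo a b

/-- The `H¹`-measure of the largest open arc of `∂B(x,r)` contained in `Ω`. -/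
def maxArcMeasure (Ω : Set E2) (x : E2) (r : ℝ) : ℝ :=
  (⨆ A ∈ {A | IsOpenArc x r A ∧ A ⊆ Ω}, μH[1] A).toReal

/-- The Carleson ε-function of the Jordan domain `Ω⁺`, where `Ω⁻ = ℝ² \ closure Ω⁺`. -/
def carlesonEps (Ω : Set E2) (x : E2) (r : ℝ) : ℝ :=
  (1 / r) * max |Real.pi * r - maxArcMeasure Ω x r|
      |Real.pi * r - maxArcMeasure ((closure Ω)ᶜ) x r|

/-- `Γ` is a Jordan curve: the image of a continuous injective map of the unit circle. -/
def IsJordanCurve (Γ : Set E2) : Prop :=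
  ∃ f : Metric.sphere (0 : ℝ × ℝ) 1 → E2,
    Continuous f ∧ Function.Injective f ∧ Set.range f = Γ

/-- A Jordan domain: an open connected set whose boundary is a Jordan curve. -/
def IsJordanDomain (Ω : Set E2) : Prop :=
  IsOpen Ω ∧ IsConnected Ω ∧ IsJordanCurve (frontier Ω)

/-- An affine line in the plane. -/
def IsAffineLine (L : Set E2) : Prop :=
  ∃ p v : E2, v ≠ 0 ∧ L = {y | ∃ t : ℝ, y = p + t • v}

/-- The (smaller) angle between the lines spanned by `u` and `v`, an element of `[0, π/2]`. -/
def lineAngle (u v : E2) : ℝ :=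
  min (InnerProductGeometry.angle u v) (Real.pi - InnerProductGeometry.angle u v)



open Real

noncomputable def vv (θ : ℝ) : E2 := (EuclideanSpace.equiv (Fin 2) ℝ).symm ![cos θ, sin θ]

lemma vv_zero (θ : ℝ) : vv θ 0 = cos θ := rfl
lemma vv_one (θ : ℝ) : vv θ 1 = sin θ := rfl

lemma inner_vv (θ₁ θ₂ : ℝ) : (inner ℝ (vv θ₁) (vv θ₂) : ℝ) = cos (θ₁ - θ₂) := by
  rw [PiLp.inner_apply, Fin.sum_univ_two, cos_sub]
  simp [vv_zero, vv_one, mul_comm]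

lemma norm_vv (θ : ℝ) : ‖vv θ‖ = 1 := by
  rw [EuclideanSpace.norm_eq, Fin.sum_univ_two, vv_zero, vv_one]
  simp only [Real.norm_eq_abs, sq_abs]
  rw [cos_sq_add_sin_sq]
  · exact Real.sqrt_one

lemma dist_vv_le (s s' : ℝ) : dist (vv s) (vv s') ≤ |s - s'| := by
  have h1 : dist (vv s) (vv s') ^ 2 = 2 - 2 * cos (s - s') := by
    rw [dist_eq_norm, EuclideanSpace.norm_eq, Fin.sum_univ_two]
    have hc : (vv s - vv s') 0 = cos s - cos s' := rfl
    have hs : (vv s - vv s') 1 = sin s - sin s' := rfl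
    rw [hc, hs]
    simp only [Real.norm_eq_abs, sq_abs]
    rw [Real.sq_sqrt (by positivity)]
    have := cos_sub s s'
    nlinarith [sin_sq_add_cos_sq s, sin_sq_add_cos_sq s']
  have h2 : 2 - 2 * cos (s - s') ≤ (s - s') ^ 2 := by
    have h3 := sin_sq_eq_half_sub ((s - s') / 2)
    have h4 : |sin ((s-s')/2)| ≤ |(s-s')/2| := Real.abs_sin_le_abs
    have h5 : sin ((s-s')/2) ^ 2 ≤ ((s-s')/2) ^ 2 := by
      rw [← sq_abs, ← sq_abs ((s-s')/2)]; exact pow_le_pow_left₀ (abs_nonneg _) h4 2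
    have h6 : cos (2 * ((s - s') / 2)) = cos (s - s') := by ring_nf
    nlinarith
  nlinarith [dist_nonneg (x := vv s) (y := vv s'), sq_abs (s - s'), abs_nonneg (s - s')]

lemma exists_theta (u : E2) (t : ℝ) (ht : 0 < t) (hu : ‖u‖ = t) : ∃ θ, u = t • vv θ := by
  set z : ℂ := ⟨u 0, u 1⟩ with hz
  have habs : ‖z‖ = t := by
    rw [Complex.norm_def, Complex.normSq_mk, ← hu, EuclideanSpace.norm_eq, Fin.sum_univ_two]
    simp [sq]
  have hz0 : z ≠ 0 := by
    intro h; rw [h] at habs; simp at habs; exact ht.ne' habs.symm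
  refine ⟨z.arg, ?_⟩
  have hcos : cos z.arg = u 0 / t := by rw [Complex.cos_arg hz0, habs]
  have hsin : sin z.arg = u 1 / t := by rw [Complex.sin_arg, habs]
  ext i
  fin_cases i
  · show u 0 = t * vv z.arg 0
    rw [vv_zero, hcos]
    field_simp
  · show u 1 = t * vv z.arg 1
    rw [vv_one, hsin]
    field_simp

lemma vv_inj {s s' : ℝ} (h : vv s = vv s') : ∃ k : ℤ, s = s' + 2 * π * k := by
  have hc : cos s = cos s' := by rw [← vv_zero, ← vv_zero, h]
  have hs : sin s = sin s' := by rw [← vv_one, ← vv_one, h]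
  have he : Complex.exp (s * Complex.I) = Complex.exp (s' * Complex.I) := by
    rw [Complex.exp_mul_I, Complex.exp_mul_I, ← Complex.ofReal_cos, ← Complex.ofReal_sin,
        ← Complex.ofReal_cos, ← Complex.ofReal_sin, hc, hs]
  rw [Complex.exp_eq_exp_iff_exists_int] at he
  obtain ⟨n, hn⟩ := he
  refine ⟨n, ?_⟩
  have h2 : ((s : ℂ) - s' - n * (2 * π)) * Complex.I = 0 := by
    rw [sub_mul, sub_mul, hn]; ring
  rcases mul_eq_zero.1 h2 with h3 | h3
  · have h4 : (s : ℂ) = s' + 2 * π * n := by linear_combination h3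
    have h5 : s = s' + 2 * π * (n : ℝ) := by exact_mod_cast h4
    exact h5
  · exact absurd h3 Complex.I_ne_zero

open MeasureTheory in
lemma measure_arc_le (x : E2) (r : ℝ) (hr : 0 ≤ r) (a b : ℝ) (hab : a ≤ b) :
    μH[1] ((fun s => x + r • vv s) '' Set.Ioo a b) ≤ ENNReal.ofReal (r * (b - a)) := by
  have hlip : LipschitzWith r.toNNReal (fun s => x + r • vv s) := by
    apply LipschitzWith.of_dist_le_mul
    intro s s'
    have : dist (x + r • vv s) (x + r • vv s') = r * dist (vv s) (vv s') := by
      rw [dist_add_left, dist_smul₀, Real.norm_eq_abs, abs_of_nonneg hr]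
    rw [this, Real.coe_toNNReal _ hr, Real.dist_eq]
    exact mul_le_mul_of_nonneg_left (dist_vv_le s s') hr
  calc μH[1] ((fun s => x + r • vv s) '' Set.Ioo a b)
      ≤ (r.toNNReal : ENNReal) ^ (1:ℝ) * μH[1] (Set.Ioo a b) :=
        hlip.hausdorffMeasure_image_le zero_le_one _
    _ = ENNReal.ofReal r * ENNReal.ofReal (b - a) := by
        rw [ENNReal.rpow_one, MeasureTheory.hausdorffMeasure_real, Real.volume_Ioo,
          ENNReal.ofReal.eq_1]; rfl
    _ = ENNReal.ofReal (r * (b - a)) := (ENNReal.ofReal_mul hr).symm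

lemma reduce_mod (b T x : ℝ) (hT : 0 < T) : ∃ k : ℤ, b ≤ x + T * k ∧ x + T * k < b + T := by
  refine ⟨-⌊(x - b) / T⌋, ?_, ?_⟩
  · have h := Int.sub_floor_div_mul_nonneg (x - b) hT
    push_cast
    nlinarith
  · have h := Int.sub_floor_div_mul_lt (x - b) hT
    push_cast
    nlinarith

lemma core_lemma (δ a b c d θ ψ : ℝ) (hδ0 : 0 ≤ δ) (hδπ : δ < π)
    (hab2 : b - a ≤ 2*π) (hcd2 : d - c ≤ 2*π)
    (hab1 : π - δ ≤ b - a) (hcd1 : π - δ ≤ d - c)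
    (hdisj : ∀ s ∈ Set.Ioo a b, ∀ s' ∈ Set.Ioo c d, ∀ k : ℤ, s ≠ s' + 2*π*k)
    (hθab : ∀ k : ℤ, θ + 2*π*k ∉ Set.Ioo a b)
    (hθcd : ∀ k : ℤ, θ + 2*π*k ∉ Set.Ioo c d)
    (hψab : ∀ k : ℤ, ψ + 2*π*k ∉ Set.Ioo a b)
    (hψcd : ∀ k : ℤ, ψ + 2*π*k ∉ Set.Ioo c d) :
    ∃ k : ℤ, |θ - ψ - k * π| ≤ 2*δ := by
  have hπ := Real.pi_pos
  set T := 2*π with hT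
  have hTpos : 0 < T := by positivity
  -- reduce c
  obtain ⟨m, hm1, hm2⟩ := reduce_mod b T c hTpos
  set c' := c + T * m with hc'
  set d' := d + T * m with hd'
  have hd'le : d' ≤ a + T := by
    by_contra hcon
    push_neg at hcon
    set p := (max c' (a+T) + min d' (b+T)) / 2 with hp
    have hlt : max c' (a+T) < min d' (b+T) := by
      rcases max_cases c' (a+T) with ⟨h,_⟩ | ⟨h,_⟩ <;> rcases min_cases d' (b+T) with ⟨h',_⟩ | ⟨h',_⟩ <;>
        simp only [h, h'] <;> simp only [hc', hd'] at * <;> linarith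
    have hp1 : p ∈ Set.Ioo c' d' := by
      constructor
      · calc c' ≤ max c' (a+T) := le_max_left _ _
          _ < p := by simp only [hp]; linarith
      · calc p < min d' (b+T) := by simp only [hp]; linarith
          _ ≤ d' := min_le_left _ _
    have hp2 : p ∈ Set.Ioo (a+T) (b+T) := by
      constructor
      · calc a+T ≤ max c' (a+T) := le_max_right _ _
          _ < p := by simp only [hp]; linarith
      · calc p < min d' (b+T) := by simp only [hp]; linarith
          _ ≤ b+T := min_le_right _ _
    have hin1 : p - T ∈ Set.Ioo a b := ⟨by linarith [hp2.1], by linarith [hp2.2]⟩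
    have hin2 : p - T * m ∈ Set.Ioo c d := ⟨by simp only [hc'] at hp1; linarith [hp1.1],
      by simp only [hd'] at hp1; linarith [hp1.2]⟩
    refine hdisj _ hin1 _ hin2 (m - 1) ?_
    push_cast
    rw [hT]
    ring
  -- reduce θ and ψ
  obtain ⟨kθ, hθ1, hθ2⟩ := reduce_mod b T θ hTpos
  set θ' := θ + T * kθ with hθ'
  obtain ⟨kψ, hψ1, hψ2⟩ := reduce_mod b T ψ hTpos
  set ψ' := ψ + T * kψ with hψ'
  have hθle : θ' ≤ a + T := by
    by_contra hcon
    push_neg at hcon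
    exact hθab (kθ - 1) (by push_cast; constructor <;> [linarith; linarith])
  have hψle : ψ' ≤ a + T := by
    by_contra hcon
    push_neg at hcon
    exact hψab (kψ - 1) (by push_cast; constructor <;> [linarith; linarith])
  have hθ'cd : θ' ∉ Set.Ioo c' d' := by
    intro hmem
    exact hθcd (kθ - m) ⟨by push_cast; simp only [hc'] at hmem; linarith [hmem.1],
      by push_cast; simp only [hd'] at hmem; linarith [hmem.2]⟩
  have hψ'cd : ψ' ∉ Set.Ioo c' d' := by
    intro hmem
    exact hψcd (kψ - m) ⟨by push_cast; simp only [hc'] at hmem; linarith [hmem.1],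
      by push_cast; simp only [hd'] at hmem; linarith [hmem.2]⟩
  -- gap bounds
  have hdc' : d' - c' = d - c := by simp only [hc', hd']; ring
  have hG1 : c' - b ≤ 2*δ := by linarith
  have hG2 : (a + T) - d' ≤ 2*δ := by linarith
  have hθcase : θ' ≤ c' ∨ d' ≤ θ' := by
    rcases le_or_gt θ' c' with h | h
    · exact Or.inl h
    · rcases le_or_gt d' θ' with h' | h'
      · exact Or.inr h'
      · exact absurd ⟨h, h'⟩ hθ'cd
  have hψcase : ψ' ≤ c' ∨ d' ≤ ψ' := by
    rcases le_or_gt ψ' c' with h | h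
    · exact Or.inl h
    · rcases le_or_gt d' ψ' with h' | h'
      · exact Or.inr h'
      · exact absurd ⟨h, h'⟩ hψ'cd
  rcases hθcase with h1 | h1 <;> rcases hψcase with h2 | h2
  · refine ⟨2*(kψ - kθ), ?_⟩
    have key : θ - ψ - ((2*(kψ - kθ) : ℤ) : ℝ) * π = θ' - ψ' := by
      rw [hθ', hψ', hT]; push_cast; ring
    rw [key, abs_le]; constructor <;> linarith [hθ1, hψ1]
  · refine ⟨2*(kψ - kθ) - 1, ?_⟩
    have key : θ - ψ - ((2*(kψ - kθ) - 1 : ℤ) : ℝ) * π = θ' - ψ' + π := by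
      rw [hθ', hψ', hT]; push_cast; ring
    rw [key, abs_le]; constructor <;> linarith [hθ1, hψle, hab1, hdc', hcd1]
  · refine ⟨2*(kψ - kθ) + 1, ?_⟩
    have key : θ - ψ - ((2*(kψ - kθ) + 1 : ℤ) : ℝ) * π = θ' - ψ' - π := by
      rw [hθ', hψ', hT]; push_cast; ring
    rw [key, abs_le]; constructor <;> linarith [hψ1, hθle, hab1, hdc', hcd1]
  · refine ⟨2*(kψ - kθ), ?_⟩
    have key : θ - ψ - ((2*(kψ - kθ) : ℤ) : ℝ) * π = θ' - ψ' := by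
      rw [hθ', hψ', hT]; push_cast; ring
    rw [key, abs_le]; constructor <;> linarith [hθle, hψle]


lemma angle_bound (Δ β : ℝ) (hβ0 : 0 ≤ β) (hβ : β < π) (h : ∃ k : ℤ, |Δ - k*π| ≤ β) :
    min (Real.arccos (Real.cos Δ)) (π - Real.arccos (Real.cos Δ)) ≤ β := by
  obtain ⟨k, hk⟩ := h
  set e := Δ - k*π with he
  have habs : |e| ≤ β := hk
  rcases Int.even_or_odd k with ⟨n, hn⟩ | ⟨n, hn⟩
  · have hΔ : Δ = |e| + n * (2*π) ∨ Δ = -|e| + n * (2*π) := by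
      rcases abs_cases e with ⟨h1, _⟩ | ⟨h1, _⟩
      · left; rw [h1, he, hn]; push_cast; ring
      · right; rw [h1, he, hn]; push_cast; ring
    have hcos : Real.cos Δ = Real.cos |e| := by
      rcases hΔ with h1 | h1 <;> rw [h1, Real.cos_add_int_mul_two_pi]
      exact Real.cos_neg _
    rw [hcos, Real.arccos_cos (abs_nonneg e) (habs.trans hβ.le)]
    exact le_trans (min_le_left _ _) habs
  · have hΔ : ∃ m : ℤ, Δ = (π - |e|) + m * (2*π) ∨ Δ = -(π - |e|) + m * (2*π) := by
      rcases abs_cases e with ⟨h1, _⟩ | ⟨h1, _⟩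
      · exact ⟨n + 1, Or.inr (by rw [h1, he, hn]; push_cast; ring)⟩
      · exact ⟨n, Or.inl (by rw [h1, he, hn]; push_cast; ring)⟩
    have hcos : Real.cos Δ = Real.cos (π - |e|) := by
      obtain ⟨m, h1 | h1⟩ := hΔ <;> rw [h1, Real.cos_add_int_mul_two_pi]
      exact Real.cos_neg _
    have h0 : 0 ≤ π - |e| := by linarith [habs]
    have h2 : π - |e| ≤ π := by linarith [abs_nonneg e]
    rw [hcos, Real.arccos_cos h0 h2]
    calc min (π - |e|) (π - (π - |e|)) ≤ π - (π - |e|) := min_le_right _ _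
      _ = |e| := by ring
      _ ≤ β := habs


lemma circlePt_eq (x : E2) (t : ℝ) : circlePt x t = fun s => x + t • vv s := rfl

lemma exists_good_arc (Ω : Set E2) (x : E2) (t δ' η : ℝ) (ht : 0 < t) (hδπ : δ' < π)
    (hη : 0 < η) (hm : π * t - t * δ' ≤ maxArcMeasure Ω x t) :
    ∃ a b : ℝ, a < b ∧ b - a ≤ 2 * π ∧ π - δ' - η ≤ b - a ∧
      ∀ s ∈ Set.Ioo a b, x + t • vv s ∈ Ω := by
  classical
  set S := ⨆ A ∈ {A | IsOpenArc x t A ∧ A ⊆ Ω}, μH[1] A with hS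
  have hmt : maxArcMeasure Ω x t = S.toReal := rfl
  rw [hmt] at hm
  have hStop : S ≠ ⊤ := by
    intro h
    rw [h, ENNReal.toReal_top] at hm
    nlinarith [Real.pi_pos]
  have hS0 : S ≠ 0 := by
    intro h
    rw [h, ENNReal.toReal_zero] at hm
    nlinarith [Real.pi_pos]
  have hsub : S - ENNReal.ofReal (t * η) < S :=
    ENNReal.sub_lt_self hStop hS0 (by simp [ENNReal.ofReal_pos]; positivity)
  rw [hS] at hsub
  obtain ⟨A, hA⟩ := lt_iSup_iff.1 hsub
  obtain ⟨hP, hA2⟩ := lt_iSup_iff.1 hA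
  obtain ⟨⟨a, b, hab, hab2, hAeq⟩, hsubΩ⟩ := hP
  refine ⟨a, b, hab, hab2, ?_, ?_⟩
  · have hmeas : μH[1] A ≤ ENNReal.ofReal (t * (b - a)) := by
      rw [hAeq, circlePt_eq]
      exact measure_arc_le x t ht.le a b hab.le
    have hle : S ≤ ENNReal.ofReal (t * (b - a)) + ENNReal.ofReal (t * η) :=
      tsub_le_iff_right.1 (le_trans hA2.le hmeas)
    rw [← ENNReal.ofReal_add (by nlinarith) (by positivity)] at hle
    have := ENNReal.toReal_le_of_le_ofReal (by nlinarith) hle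
    have h2 : π * t - t * δ' ≤ t * (b - a) + t * η := le_trans hm this
    nlinarith
  · intro s hs
    apply hsubΩ
    rw [hAeq, circlePt_eq]
    exact Set.mem_image_of_mem _ hs

/-- Line Choice (Corollary 2.2): for `y, w ∈ ∂B(x₀,t) ∩ Γ`, the angle between the line through
`x₀` and `w` and the line through `x₀` and `y` is at most `2C₀ t^α`. -/
theorem line_choice (Ωp : Set E2) (hΩ : IsJordanDomain Ωp)
    (Ωm : Set E2) (hΩm : Ωm = (closure Ωp)ᶜ)
    (Γ : Set E2) (hΓp : Γ = frontier Ωp) (hΓm : Γ = frontier Ωm)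
    (α C₀ : ℝ) (hα : α ∈ Set.Ioo (0 : ℝ) 1) (hC₀ : 0 < C₀)
    (r₀ : ℝ) (hr₀ : 0 < r₀)
    (hε : ∀ x ∈ Γ, ∀ r : ℝ, 0 < r → r ≤ r₀ → carlesonEps Ωp x r ≤ C₀ * r ^ α)
    (x₀ : E2) (hx₀ : x₀ ∈ Γ) (t : ℝ) (ht : 0 < t) (ht' : t ≤ r₀)
    (y w : E2) (hy : y ∈ Metric.sphere x₀ t ∩ Γ) (hw : w ∈ Metric.sphere x₀ t ∩ Γ) :
    lineAngle (w - x₀) (y - x₀) ≤ 2 * C₀ * t ^ α := by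
  obtain ⟨hysph, hyΓ⟩ := hy
  obtain ⟨hwsph, hwΓ⟩ := hw
  have hπ := Real.pi_pos
  have htα : (0:ℝ) < t ^ α := Real.rpow_pos_of_pos ht α
  set δ' := C₀ * t ^ α with hδ'
  have hδ'pos : 0 < δ' := by positivity
  have hla : lineAngle (w - x₀) (y - x₀) ≤ π / 2 := by
    rw [lineAngle]
    rcases le_total (InnerProductGeometry.angle (w - x₀) (y - x₀)) (π/2) with h | h
    · exact le_trans (min_le_left _ _) h
    · exact le_trans (min_le_right _ _) (by linarith)
  rcases le_or_gt (π/4) δ' with hbig | hsmall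
  · calc lineAngle (w - x₀) (y - x₀) ≤ π/2 := hla
      _ ≤ 2 * δ' := by linarith
      _ = 2 * C₀ * t ^ α := by rw [hδ']; ring
  -- unpack the ε-condition at scale t
  have hεx := hε x₀ hx₀ t ht ht'
  rw [carlesonEps] at hεx
  have hmax : max |π * t - maxArcMeasure Ωp x₀ t|
      |π * t - maxArcMeasure ((closure Ωp)ᶜ) x₀ t| ≤ t * δ' := by
    have h2 := mul_le_mul_of_nonneg_left hεx ht.le
    calc max |π * t - maxArcMeasure Ωp x₀ t| |π * t - maxArcMeasure ((closure Ωp)ᶜ) x₀ t|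
        = t * (1 / t * max |π * t - maxArcMeasure Ωp x₀ t|
            |π * t - maxArcMeasure ((closure Ωp)ᶜ) x₀ t|) := by
          field_simp
      _ ≤ t * δ' := h2
  have hm1 : π * t - t * δ' ≤ maxArcMeasure Ωp x₀ t := by
    have h3 := le_trans (le_max_left _ _) hmax
    have h4 := (abs_le.1 h3).2
    linarith
  have hm2 : π * t - t * δ' ≤ maxArcMeasure ((closure Ωp)ᶜ) x₀ t := by
    have h3 := le_trans (le_max_right _ _) hmax
    have h4 := (abs_le.1 h3).2
    linarith
  -- Γ facts
  have hfr : frontier Ωp = closure Ωp \ Ωp := hΩ.1.frontier_eq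
  have hyfr : y ∈ closure Ωp \ Ωp := by rw [← hfr, ← hΓp]; exact hyΓ
  have hwfr : w ∈ closure Ωp \ Ωp := by rw [← hfr, ← hΓp]; exact hwΓ
  -- angles of y and w
  have hynorm : ‖y - x₀‖ = t := by rw [← dist_eq_norm]; exact Metric.mem_sphere.1 hysph
  have hwnorm : ‖w - x₀‖ = t := by rw [← dist_eq_norm]; exact Metric.mem_sphere.1 hwsph
  obtain ⟨θy, hθy⟩ := exists_theta (y - x₀) t ht hynorm
  obtain ⟨θw, hθw⟩ := exists_theta (w - x₀) t ht hwnorm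
  have hyeq : x₀ + t • vv θy = y := by rw [← hθy]; abel
  have hweq : x₀ + t • vv θw = w := by rw [← hθw]; abel
  -- periodicity of vv
  have hvvper : ∀ (s : ℝ) (k : ℤ), vv (s + 2*π*k) = vv s := by
    intro s k
    ext i
    fin_cases i
    · show cos (s + 2*π*k) = cos s
      rw [show s + 2*π*(k:ℝ) = s + (k:ℝ)*(2*π) by ring, Real.cos_add_int_mul_two_pi]
    · show sin (s + 2*π*k) = sin s
      rw [show s + 2*π*(k:ℝ) = s + (k:ℝ)*(2*π) by ring, Real.sin_add_int_mul_two_pi]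
  -- reduce to an ε-δ statement
  have key : ∀ ε : ℝ, 0 < ε → lineAngle (w - x₀) (y - x₀) ≤ 2 * C₀ * t ^ α + ε := by
    intro ε hεpos
    rcases le_or_gt (π/2) ε with hbigε | hsmallε
    · calc lineAngle (w - x₀) (y - x₀) ≤ π/2 := hla
        _ ≤ ε := hbigε
        _ ≤ 2 * C₀ * t ^ α + ε := by nlinarith
    set η := ε / 2 with hη
    have hηpos : 0 < η := by positivity
    obtain ⟨a, b, hab, hab2, hab1, harcP⟩ :=
      exists_good_arc Ωp x₀ t δ' η ht (by linarith) hηpos hm1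
    obtain ⟨c, d, hcd, hcd2, hcd1, harcM⟩ :=
      exists_good_arc ((closure Ωp)ᶜ) x₀ t δ' η ht (by linarith) hηpos hm2
    -- apply the core lemma
    have hcore := core_lemma (δ' + η) a b c d θw θy
      (by positivity) (by linarith)
      hab2 hcd2 (by linarith) (by linarith)
      (by
        intro s hs s' hs' k heq
        have h1 : x₀ + t • vv s ∈ Ωp := harcP s hs
        have h2 : x₀ + t • vv s' ∈ (closure Ωp)ᶜ := harcM s' hs'
        rw [heq, hvvper] at h1
        exact h2 (subset_closure h1))
      (by
        intro k hk
        have h1 : x₀ + t • vv (θw + 2*π*k) ∈ Ωp := harcP _ hk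
        rw [hvvper, hweq] at h1
        exact hwfr.2 h1)
      (by
        intro k hk
        have h1 : x₀ + t • vv (θw + 2*π*k) ∈ (closure Ωp)ᶜ := harcM _ hk
        rw [hvvper, hweq] at h1
        exact h1 hwfr.1)
      (by
        intro k hk
        have h1 : x₀ + t • vv (θy + 2*π*k) ∈ Ωp := harcP _ hk
        rw [hvvper, hyeq] at h1
        exact hyfr.2 h1)
      (by
        intro k hk
        have h1 : x₀ + t • vv (θy + 2*π*k) ∈ (closure Ωp)ᶜ := harcM _ hk
        rw [hvvper, hyeq] at h1
        exact h1 hyfr.1)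
    -- compute the line angle
    have hangle : lineAngle (w - x₀) (y - x₀) =
        min (Real.arccos (Real.cos (θw - θy))) (π - Real.arccos (Real.cos (θw - θy))) := by
      rw [lineAngle, hθw, hθy, InnerProductGeometry.angle_smul_smul ht.ne',
        InnerProductGeometry.angle]
      rw [inner_vv, norm_vv, norm_vv]
      norm_num
    rw [hangle]
    obtain ⟨k, hk⟩ := hcore
    have hβ : (2:ℝ) * (δ' + η) = 2 * δ' + ε := by rw [hη]; ring
    refine le_trans (angle_bound (θw - θy) (2 * δ' + ε) (by positivity) (by linarith) ?_) ?_
    · exact ⟨k, by rw [← hβ]; exact hk⟩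
    · rw [hδ']; linarith
  exact le_of_forall_pos_le_add key

end
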